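/- Let G = S_4, the symmetric group of degree 4, and let P be a Sylow 2-subgroup of G. Then P is dihedral of order 8, N_G(P) = P, every subgroup of P of order 2 is either complemented in P or contained in Z(P), but G is not 2-nilpotent. -/

import Mathlib

open Subgroup Pointwise

/-- `A < B` is a chief factor of `G`. -/
def IsChiefFactor (G : Type*) [Group G] (A B : Subgroup G) : Prop :=
  A.Normal ∧ B.Normal ∧ A < B ∧
    ∀ N : Subgroup G, N.Normal → A ≤ N → N ≤ B → N = A ∨ N = B

/-- The order of the factor group `B/A`. -/
noncomputable def factorCard {G : Type*} [Group G] (A B : Subgroup G) : ℕ :=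
  Nat.card B / Nat.card A

/-- A finite group is `p`-solvable if every chief factor is a `p`-group or a `p'`-group. -/
def IsPSolvable (p : ℕ) (G : Type*) [Group G] : Prop :=
  ∀ A B : Subgroup G, IsChiefFactor G A B →
    (∃ n : ℕ, factorCard A B = p ^ n) ∨ ¬ p ∣ factorCard A B

/-- A finite group is `p`-supersolvable if it is `p`-solvable and every `p`-chief factor
has order `p`. -/
def IsPSupersolvable (p : ℕ) (G : Type*) [Group G] : Prop :=
  IsPSolvable p G ∧ ∀ A B : Subgroup G, IsChiefFactor G A B →
    p ∣ factorCard A B → factorCard A B = p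

/-- A finite group is `p`-nilpotent if it has a normal Hall `p'`-subgroup. -/
def IsPNilpotent (p : ℕ) (G : Type*) [Group G] : Prop :=
  ∃ H : Subgroup G, H.Normal ∧ ¬ p ∣ Nat.card H ∧ ∃ n : ℕ, H.index = p ^ n

/-- The quotient `G ⧸ N` is `p`-supersolvable (for `N` normal). -/
def QuotientIsPSupersolvable (p : ℕ) {G : Type*} [Group G] (N : Subgroup G) : Prop :=
  ∀ [N.Normal], IsPSupersolvable p (G ⧸ N)

/-- `R` is the `p`-supersolvable residual of `G`: the smallest normal subgroup with
`p`-supersolvable quotient. -/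
def IsPSupersolvableResidual (p : ℕ) {G : Type*} [Group G] (R : Subgroup G) : Prop :=
  R.Normal ∧ QuotientIsPSupersolvable p R ∧
    ∀ N : Subgroup G, N.Normal → QuotientIsPSupersolvable p N → R ≤ N

/-- the center `Z(K)` of a subgroup `K`, as a subgroup of the ambient group. -/
def centerOf {G : Type*} [Group G] (K : Subgroup G) : Subgroup G :=
  Subgroup.centralizer (K : Set G) ⊓ K

/-- `H` is c-embedded in `G` with respect to `K`: there is `B ≤ G` with `G = HB` and
`H ∩ B ≤ Z(K)`. -/
def IsCEmbedded {G : Type*} [Group G] (H K : Subgroup G) : Prop :=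
  ∃ B : Subgroup G, (∀ g : G, ∃ h ∈ H, ∃ b ∈ B, g = h * b) ∧ H ⊓ B ≤ centerOf K

/-- A group is quaternion-free if no section is isomorphic to the quaternion group `Q₈`. -/
def QuaternionFree (G : Type*) [Group G] : Prop :=
  ∀ (H : Subgroup G) (N : Subgroup H) [N.Normal], IsEmpty ((H ⧸ N) ≃* QuaternionGroup 2)

/-- the conjugate `P^x = x⁻¹ P x`. -/
def conjSub {G : Type*} [Group G] (P : Subgroup G) (x : G) : Subgroup G :=
  (MulAut.conj x⁻¹) • P

/-! ### Auxiliary material for `stmt9` -/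

private def rr : Equiv.Perm (Fin 4) := c[0, 1, 2, 3]
private def ss : Equiv.Perm (Fin 4) := c[1, 3]

private def Pfin : Finset (Equiv.Perm (Fin 4)) :=
  {1, rr, rr^2, rr^3, ss, rr*ss, rr^2*ss, rr^3*ss}
private def Bfin : Finset (Equiv.Perm (Fin 4)) := {1, rr, rr^2, rr^3}

private def P0 : Subgroup (Equiv.Perm (Fin 4)) where
  carrier := {x | x ∈ Pfin}
  mul_mem' := by
    have : ∀ a b, a ∈ Pfin → b ∈ Pfin → a*b ∈ Pfin := by decide
    exact fun {a b} ha hb => this a b ha hb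
  one_mem' := by decide
  inv_mem' := by
    have : ∀ a, a ∈ Pfin → a⁻¹ ∈ Pfin := by decide
    exact fun {a} ha => this a ha

private def B0 : Subgroup (Equiv.Perm (Fin 4)) where
  carrier := {x | x ∈ Bfin}
  mul_mem' := by
    have : ∀ a b, a ∈ Bfin → b ∈ Bfin → a*b ∈ Bfin := by decide
    exact fun {a b} ha hb => this a b ha hb
  one_mem' := by decide
  inv_mem' := by
    have : ∀ a, a ∈ Bfin → a⁻¹ ∈ Bfin := by decide
    exact fun {a} ha => this a ha

private lemma mem_P0 (x : Equiv.Perm (Fin 4)) : x ∈ P0 ↔ x ∈ Pfin := by exact Iff.rfl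
private lemma mem_B0 (x : Equiv.Perm (Fin 4)) : x ∈ B0 ↔ x ∈ Bfin := by exact Iff.rfl

private instance : DecidablePred (· ∈ P0) := fun x => decidable_of_iff (x ∈ Pfin) (mem_P0 x).symm
private instance : DecidablePred (· ∈ B0) := fun x => decidable_of_iff (x ∈ Bfin) (mem_B0 x).symm

private lemma card_P0 : Nat.card P0 = 8 := by
  rw [Nat.card_eq_fintype_card]; decide

private lemma B0_le_P0 : B0 ≤ P0 := by
  intro x hx
  rw [mem_B0] at hx; rw [mem_P0]
  revert hx; revert x; decide

private def dihF : DihedralGroup 4 → Equiv.Perm (Fin 4)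
  | DihedralGroup.r i => rr ^ i.val
  | DihedralGroup.sr i => ss * rr ^ i.val

private def dihHom : DihedralGroup 4 →* Equiv.Perm (Fin 4) where
  toFun := dihF
  map_one' := by decide
  map_mul' := by decide

private lemma dihMem : ∀ a : DihedralGroup 4, dihF a ∈ P0 := by decide

private lemma dihInj : ∀ a b : DihedralGroup 4, dihF a = dihF b → a = b := by decide

private noncomputable def dihEquiv : DihedralGroup 4 ≃* P0 :=
  MulEquiv.ofBijective (dihHom.codRestrict P0 dihMem)
    ((Fintype.bijective_iff_injective_and_card _).mpr
      ⟨fun a b h => dihInj a b (congrArg Subtype.val h), by decide⟩)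

private lemma normalizer_P0 : Subgroup.normalizer (P0 : Set (Equiv.Perm (Fin 4))) = P0 := by
  apply le_antisymm _ le_normalizer
  intro x hx
  rw [mem_normalizer_iff] at hx
  have hx' : ∀ h, h ∈ Pfin ↔ x * h * x⁻¹ ∈ Pfin := hx
  rw [mem_P0]
  revert hx'; revert x
  set_option maxRecDepth 100000 in decide

private lemma key0 : ∀ x, x ∈ Pfin → x*x = 1 → x ≠ 1 →
    (∀ y ∈ Pfin, y*x = x*y) ∨ (x ∉ Bfin ∧ ∀ p ∈ Pfin, p ∈ Bfin ∨ x*p ∈ Bfin) := by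
  decide

private lemma key3 : ∀ x : Equiv.Perm (Fin 4), x*x*x = 1 → x ≠ 1 →
    ∃ g, g*x*g⁻¹ ≠ 1 ∧ g*x*g⁻¹ ≠ x ∧ g*x*g⁻¹ ≠ x*x := by
  decide

private lemma mem_zpowers_cases {G : Type*} [Group G] {x z : G} (n : ℕ)
    (hxn : x ^ (n : ℤ) = 1) (hn : 0 < n) (hz : z ∈ Subgroup.zpowers x) :
    ∃ r : ℕ, r < n ∧ z = x ^ r := by
  obtain ⟨k, hk⟩ := Subgroup.mem_zpowers_iff.mp hz
  have hnz : (0:ℤ) < n := by exact_mod_cast hn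
  refine ⟨(k % n).toNat, ?_, ?_⟩
  · have := Int.emod_lt_of_pos k hnz
    omega
  · have h0 : 0 ≤ k % n := Int.emod_nonneg k (by omega)
    have h2 : x ^ k = x ^ (k % (n:ℤ)) := by
      conv_lhs => rw [← Int.mul_ediv_add_emod k n]
      rw [zpow_add, zpow_mul, hxn, one_zpow, one_mul]
    rw [← hk, h2, ← zpow_natCast, Int.toNat_of_nonneg h0]

private lemma cardS4 : Nat.card (Equiv.Perm (Fin 4)) = 24 := by
  rw [Nat.card_eq_fintype_card]; decide

private lemma fact24 : (Nat.factorization 24) 2 = 3 := by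
  have : (24:ℕ) = 2^3 * 3 := by norm_num
  rw [this, Nat.factorization_mul (by norm_num) (by norm_num)]
  rw [Nat.Prime.factorization_pow Nat.prime_two]
  simp [Nat.Prime.factorization (by norm_num : Nat.Prime 3)]

private lemma not_nilp : ¬ IsPNilpotent 2 (Equiv.Perm (Fin 4)) := by
  rintro ⟨H, hN, hodd, n, hidx⟩
  have hmul : Nat.card H * 2 ^ n = 24 := by
    rw [← hidx, Subgroup.card_mul_index, cardS4]
  have hn4 : n ≤ 4 := by
    by_contra h
    have : 2 ^ 5 ≤ 2 ^ n := Nat.pow_le_pow_right (by norm_num) (by omega)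
    have : 1 ≤ Nat.card H := Nat.card_pos
    nlinarith
  have hcard3 : Nat.card H = 3 := by
    interval_cases n <;> norm_num at hmul <;> omega
  obtain hbot | ⟨x, hxH, hx1⟩ := H.bot_or_exists_ne_one
  · rw [hbot] at hcard3; simp at hcard3
  have hx3 : x ^ 3 = 1 := by
    have : (⟨x, hxH⟩ : H) ^ 3 = 1 := by
      rw [← hcard3]; exact pow_card_eq_one'
    exact congrArg Subtype.val this
  haveI : Fact (Nat.Prime 3) := ⟨by norm_num⟩
  have hord : orderOf x = 3 := orderOf_eq_prime hx3 hx1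
  have hzp : Subgroup.zpowers x = H :=
    Subgroup.eq_of_le_of_card_ge (Subgroup.zpowers_le.mpr hxH)
      (by rw [hcard3, Nat.card_zpowers, hord])
  obtain ⟨g, hg1, hg2, hg3⟩ := key3 x (by rw [← pow_three']; exact hx3) hx1
  have hy : g * x * g⁻¹ ∈ Subgroup.zpowers x := by
    rw [hzp]; exact hN.conj_mem x hxH g
  obtain ⟨r, hr, hyr⟩ := mem_zpowers_cases 3 (by exact_mod_cast hx3) (by norm_num) hy
  interval_cases r
  · rw [pow_zero] at hyr; exact hg1 hyr
  · rw [pow_one] at hyr; exact hg2 hyr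
  · rw [pow_two] at hyr; exact hg3 hyr

private noncomputable def sylow0 : Sylow 2 (Equiv.Perm (Fin 4)) :=
  Sylow.ofCard P0 (by rw [card_P0, cardS4, fact24]; norm_num)

private lemma mem_conj_iff (g x : Equiv.Perm (Fin 4)) (S : Subgroup (Equiv.Perm (Fin 4))) :
    x ∈ MulAut.conj g • S ↔ g⁻¹ * x * g ∈ S := by
  rw [Subgroup.mem_pointwise_smul_iff_inv_smul_mem]
  simp [MulAut.smul_def, mul_assoc]

private lemma conj_mem' (g w : Equiv.Perm (Fin 4)) (S : Subgroup (Equiv.Perm (Fin 4)))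
    (hw : w ∈ S) : g * w * g⁻¹ ∈ MulAut.conj g • S := by
  rw [mem_conj_iff]
  have h : g⁻¹ * (g * w * g⁻¹) * g = w := by group
  rw [h]; exact hw

private lemma order_two (g : Equiv.Perm (Fin 4)) (H : Subgroup (Equiv.Perm (Fin 4)))
    (hle : H ≤ MulAut.conj g • P0) (hcard : Nat.card H = 2) :
    (∃ B, B ≤ MulAut.conj g • P0 ∧
      (∀ y ∈ MulAut.conj g • P0, ∃ h ∈ H, ∃ b ∈ B, y = h * b) ∧ H ⊓ B = ⊥) ∨
    H ≤ centerOf (MulAut.conj g • P0) := by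
  obtain hbot | ⟨x, hxH, hx1⟩ := H.bot_or_exists_ne_one
  · rw [hbot] at hcard; simp at hcard
  have hx2 : x ^ 2 = 1 := by
    have : (⟨x, hxH⟩ : H) ^ 2 = 1 := by rw [← hcard]; exact pow_card_eq_one'
    exact congrArg Subtype.val this
  have hord : orderOf x = 2 := orderOf_eq_prime hx2 hx1
  have hzp : Subgroup.zpowers x = H :=
    Subgroup.eq_of_le_of_card_ge (Subgroup.zpowers_le.mpr hxH)
      (by rw [hcard, Nat.card_zpowers, hord])
  set x0 := g⁻¹ * x * g with hx0
  have hx0P : x0 ∈ Pfin := (mem_P0 _).mp ((mem_conj_iff g x P0).mp (hle hxH))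
  have hxval : x = g * x0 * g⁻¹ := by rw [hx0]; group
  have hxx : x * x = 1 := by rw [← pow_two]; exact hx2
  have hx0sq : x0 * x0 = 1 := by
    rw [hx0]
    calc g⁻¹*x*g*(g⁻¹*x*g) = g⁻¹*(x*x)*g := by group
    _ = 1 := by rw [hxx]; group
  have hx0ne : x0 ≠ 1 := fun h => hx1 (by rw [hxval, h]; group)
  have hHmem : ∀ z ∈ H, z = 1 ∨ z = x := by
    intro z hz
    obtain ⟨r, hr, hzr⟩ := mem_zpowers_cases 2 (by exact_mod_cast hx2) (by norm_num)
      (hzp ▸ hz)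
    interval_cases r
    · left; rw [pow_zero] at hzr; exact hzr
    · right; rw [pow_one] at hzr; exact hzr
  rcases key0 x0 hx0P hx0sq hx0ne with hcent | ⟨hnB, hdec⟩
  · right
    rw [← hzp, Subgroup.zpowers_le]
    refine Subgroup.mem_inf.mpr ⟨?_, hle hxH⟩
    rw [Subgroup.mem_centralizer_iff]
    intro y hy
    have hy0 : g⁻¹ * y * g ∈ Pfin := (mem_P0 _).mp ((mem_conj_iff g y P0).mp hy)
    have hc := hcent _ hy0
    have hyval : y = g * (g⁻¹*y*g) * g⁻¹ := by group
    rw [hyval, hxval]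
    calc g * (g⁻¹*y*g) * g⁻¹ * (g * x0 * g⁻¹) = g * ((g⁻¹*y*g) * x0) * g⁻¹ := by group
    _ = g * (x0 * (g⁻¹*y*g)) * g⁻¹ := by rw [hc]
    _ = g * x0 * g⁻¹ * (g * (g⁻¹*y*g) * g⁻¹) := by group
  · left
    refine ⟨MulAut.conj g • B0,
      Subgroup.pointwise_smul_le_pointwise_smul_iff.mpr B0_le_P0, ?_, ?_⟩
    · intro y hy
      have hy0 : g⁻¹ * y * g ∈ Pfin := (mem_P0 _).mp ((mem_conj_iff g y P0).mp hy)
      rcases hdec _ hy0 with hb | hb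
      · refine ⟨1, H.one_mem, y, ?_, (one_mul y).symm⟩
        have : y = g * (g⁻¹*y*g) * g⁻¹ := by group
        rw [this]
        exact conj_mem' g _ B0 ((mem_B0 _).mpr hb)
      · refine ⟨x, hxH, g * (x0 * (g⁻¹*y*g)) * g⁻¹,
          conj_mem' g _ B0 ((mem_B0 _).mpr hb), ?_⟩
        calc y = g * ((x0*x0) * (g⁻¹*y*g)) * g⁻¹ := by rw [hx0sq, one_mul]; group
        _ = (g * x0 * g⁻¹) * (g * (x0 * (g⁻¹*y*g)) * g⁻¹) := by group
        _ = x * (g * (x0 * (g⁻¹*y*g)) * g⁻¹) := by rw [← hxval]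
    · rw [eq_bot_iff]
      intro z hz
      obtain ⟨hzH, hzB⟩ := Subgroup.mem_inf.mp hz
      rcases hHmem z hzH with rfl | rfl
      · exact Subgroup.one_mem ⊥
      · exact absurd ((mem_B0 _).mp ((mem_conj_iff g z B0).mp hzB)) hnB

/-- the example `S₄` with `p = 2`. -/
theorem stmt9 (P : Sylow 2 (Equiv.Perm (Fin 4))) :
    Nonempty ((P : Subgroup (Equiv.Perm (Fin 4))) ≃* DihedralGroup 4) ∧
    Nat.card (P : Subgroup (Equiv.Perm (Fin 4))) = 8 ∧
    Subgroup.normalizer ((P : Subgroup (Equiv.Perm (Fin 4))) : Set (Equiv.Perm (Fin 4))) = P ∧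
    (∀ H : Subgroup (Equiv.Perm (Fin 4)), H ≤ P → Nat.card H = 2 →
      (∃ B : Subgroup (Equiv.Perm (Fin 4)), B ≤ P ∧
        (∀ g ∈ (P : Subgroup (Equiv.Perm (Fin 4))), ∃ h ∈ H, ∃ b ∈ B, g = h * b) ∧
        H ⊓ B = ⊥) ∨
      H ≤ centerOf (P : Subgroup (Equiv.Perm (Fin 4)))) ∧
    ¬ IsPNilpotent 2 (Equiv.Perm (Fin 4)) := by
  obtain ⟨g, hg⟩ := MulAction.exists_smul_eq (Equiv.Perm (Fin 4)) sylow0 P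
  have hP : (P : Subgroup (Equiv.Perm (Fin 4))) = MulAut.conj g • P0 := by
    rw [← hg, Sylow.coe_subgroup_smul]
    rfl
  have hmap : (MulAut.conj g • P0 : Subgroup (Equiv.Perm (Fin 4)))
      = P0.map ((MulAut.conj g : Equiv.Perm (Fin 4) ≃* Equiv.Perm (Fin 4)) :
          Equiv.Perm (Fin 4) →* Equiv.Perm (Fin 4)) := rfl
  refine ⟨?_, ?_, ?_, ?_, not_nilp⟩
  · rw [hP, hmap]
    exact ⟨(dihEquiv.trans (MulEquiv.subgroupMap
      (MulAut.conj g : Equiv.Perm (Fin 4) ≃* Equiv.Perm (Fin 4)) P0)).symm⟩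
  · rw [hP, hmap]
    exact (Nat.card_congr (MulEquiv.subgroupMap
      (MulAut.conj g : Equiv.Perm (Fin 4) ≃* Equiv.Perm (Fin 4)) P0).toEquiv).symm.trans card_P0
  · rw [hP, hmap]
    have h := map_equiv_normalizer_eq P0
      (MulAut.conj g : Equiv.Perm (Fin 4) ≃* Equiv.Perm (Fin 4))
    rw [normalizer_P0] at h
    exact h.symm
  · intro H hle hcard
    rw [hP] at hle ⊢
    exact order_two g H hle hcard
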